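/- Let N ≥ 2, let t_1⋯t_p be an admissible block, and let (θ_i) be the generalized Thue–Morse sequence generated by t_1⋯t_p^+. Then for every n ≥ 0 and every 1 ≤ i ≤ 2^n p, the block θ_i⋯θ_{2^n p} satisfies the strict lower bound (reflection of θ_1⋯θ_{2^n p - i + 1}) < θ_i⋯θ_{2^n p} and the upper bound θ_i⋯θ_{2^n p} ≤ θ_1⋯θ_{2^n p - i + 1} in lexicographic order. -/

import Mathlib

/-- Reflection of a block: each digit `c` becomes `N - 1 - c`. -/
def reflB (N : ℕ) (w : List ℕ) : List ℕ := w.map (fun c => N - 1 - c)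

/-- The block `w` with its last digit incremented by one. -/
def plusB (w : List ℕ) : List ℕ := w.dropLast ++ [w.getLast! + 1]

/-- The `i`-th cyclic rotation of the block `w` (0-indexed). -/
def rotB (w : List ℕ) (i : ℕ) : List ℕ := w.drop i ++ w.take i

/-- The lexicographic inequalities defining admissibility of a block. -/
def AdmissibleIneq (N : ℕ) (w : List ℕ) : Prop :=
  ∀ i < w.length,
    reflB N w ≤ rotB w i ∧ plusB (w.drop i) ++ reflB N (w.take i) ≤ plusB w

/-- An admissible block in `{0, …, N-1}`. -/
def Admissible (N : ℕ) (w : List ℕ) : Prop :=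
  w ≠ [] ∧ (∀ c ∈ w, c < N) ∧ w.getLast! < N - 1 ∧ AdmissibleIneq N w

/-- Prefixes of the generalized Thue–Morse sequence generated by `plusB w`:
`gtmBlock N w n` is the prefix `θ_1 ⋯ θ_{2^n p}`. -/
def gtmBlock (N : ℕ) (w : List ℕ) : ℕ → List ℕ
  | 0 => plusB w
  | n + 1 => gtmBlock N w n ++ plusB (reflB N (gtmBlock N w n))

/-- The generalized Thue–Morse sequence generated by `plusB w`, 0-indexed:
`gtm N w n = θ_{n+1}`. -/
def gtm (N : ℕ) (w : List ℕ) : ℕ → ℕ := fun n => (gtmBlock N w n).getD n 0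

/-- Strict lexicographic order on infinite sequences of digits. -/
def seqLt (a b : ℕ → ℕ) : Prop := ∃ n, (∀ k < n, a k = b k) ∧ a n < b n

/-- Lexicographic order on infinite sequences of digits. -/
def seqLe (a b : ℕ → ℕ) : Prop := seqLt a b ∨ a = b

/-- Shift of a sequence by `k` places. -/
def shift (a : ℕ → ℕ) (k : ℕ) : ℕ → ℕ := fun n => a (n + k)

/-- The periodic sequence `w^∞` obtained by repeating the block `w`. -/
def per (w : List ℕ) : ℕ → ℕ := fun n => w.getD (n % w.length) 0

/-- Reflection of an infinite sequence. -/
def reflSeq (N : ℕ) (a : ℕ → ℕ) : ℕ → ℕ := fun n => N - 1 - a n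

/-- The classical Thue–Morse sequence: parity of the binary digit sum. -/
def tm (i : ℕ) : ℕ := (Nat.digits 2 i).sum % 2

/-- Number of length-`n` words appearing in sequences of `Z`. -/
noncomputable def wordCount (Z : Set (ℕ → ℕ)) (n : ℕ) : ℕ :=
  Set.ncard { u : List ℕ | u.length = n ∧ ∃ d ∈ Z, ∀ k < n, u.getD k 0 = d k }

/-- `Z` has topological entropy `h`. -/
def hasEntropy (Z : Set (ℕ → ℕ)) (h : ℝ) : Prop :=
  Filter.Tendsto (fun n : ℕ => Real.log (wordCount Z n) / n) Filter.atTop (nhds h)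

namespace LexAux

lemma lex_lt {x y : List ℕ} (h : List.Lex (· < ·) x y) : x < y := h

lemma getLast!_eq_getLast (l : List ℕ) (h : l ≠ []) : l.getLast! = l.getLast h := by
  cases l with
  | nil => exact absurd rfl h
  | cons a as => rfl

lemma getLast!_append {x y : List ℕ} (h : y ≠ []) : (x ++ y).getLast! = y.getLast! := by
  rw [getLast!_eq_getLast _ (by simp [h]), List.getLast_append_of_ne_nil _ h,
    getLast!_eq_getLast _ h]

lemma getLast!_concat (x : List ℕ) (e : ℕ) : (x ++ [e]).getLast! = e := by
  rw [getLast!_append (by simp : ([e]:List ℕ) ≠ [])]; rfl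

lemma plusB_eq (w : List ℕ) (h : w ≠ []) : plusB w = w.dropLast ++ [w.getLast h + 1] := by
  rw [plusB, getLast!_eq_getLast w h]

lemma length_plusB (w : List ℕ) (h : w ≠ []) : (plusB w).length = w.length := by
  have := List.length_pos_iff.2 h
  simp [plusB]; omega

lemma plusB_ne_nil (w : List ℕ) : plusB w ≠ [] := by simp [plusB]

lemma take_plusB (w : List ℕ) (k : ℕ) (hk : k ≤ w.length - 1) :
    (plusB w).take k = w.take k := by
  rw [plusB, List.take_append_of_le_length (by simp [List.dropLast_eq_take]; omega),
    List.dropLast_eq_take, List.take_take, min_eq_left hk]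

lemma drop_plusB (w : List ℕ) (j : ℕ) (hj : j < w.length) :
    (plusB w).drop j = plusB (w.drop j) := by
  have hd : w.drop j ≠ [] := by
    intro h; have := congrArg List.length h; simp at this; omega
  rw [plusB, plusB,
    List.drop_append_of_le_length (by simp [List.dropLast_eq_take]; omega)]
  congr 1
  · rw [List.dropLast_eq_take, List.dropLast_eq_take, List.drop_take]
    congr 1; simp; omega
  · congr 2
    conv_lhs => rw [← List.take_append_drop j w]
    exact getLast!_append hd

lemma cons_lt_cons_iff {a b : ℕ} {l m : List ℕ} :
    (a :: l : List ℕ) < b :: m ↔ a < b ∨ (a = b ∧ l < m) := by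
  constructor
  · intro h
    cases h with
    | rel h => exact Or.inl h
    | cons h => exact Or.inr ⟨rfl, h⟩
  · rintro (h | ⟨rfl, h⟩)
    · exact List.Lex.rel h
    · exact List.Lex.cons h

lemma lt_append_iff : ∀ {x y : List ℕ}, x.length = y.length → ∀ {u v : List ℕ},
    (x ++ u < y ++ v ↔ x < y ∨ (x = y ∧ u < v))
  | [], [], _, u, v => by
      simp only [List.nil_append]
      constructor
      · intro h; exact Or.inr ⟨by trivial, h⟩
      · rintro (h | ⟨-, h⟩)
        · exact absurd h (lt_irrefl _)
        · exact h
  | a :: x, b :: y, h, u, v => by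
      have hlen : x.length = y.length := by simpa using h
      simp only [List.cons_append]
      rw [cons_lt_cons_iff, cons_lt_cons_iff, lt_append_iff hlen]
      constructor
      · rintro (h1 | ⟨rfl, (h2 | ⟨rfl, h3⟩)⟩)
        · exact Or.inl (Or.inl h1)
        · exact Or.inl (Or.inr ⟨rfl, h2⟩)
        · exact Or.inr ⟨by trivial, h3⟩
      · rintro ((h1 | ⟨rfl, h2⟩) | ⟨heq, h3⟩)
        · exact Or.inl h1
        · exact Or.inr ⟨rfl, Or.inl h2⟩
        · obtain ⟨rfl, rfl⟩ := List.cons_eq_cons.1 heq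
          exact Or.inr ⟨rfl, Or.inr ⟨by trivial, h3⟩⟩
  | [], b :: y, h, _, _ => by simp at h
  | a :: x, [], h, _, _ => by simp at h

lemma lt_append_of_lt {x y : List ℕ} (h : x.length = y.length) (hxy : x < y)
    (u v : List ℕ) : x ++ u < y ++ v := (lt_append_iff h).2 (Or.inl hxy)

lemma le_append_iff {x y : List ℕ} (h : x.length = y.length) {u v : List ℕ} :
    x ++ u ≤ y ++ v ↔ x < y ∨ (x = y ∧ u ≤ v) := by
  constructor
  · intro hle
    rcases lt_trichotomy x y with h1 | h1 | h1
    · exact Or.inl h1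
    · subst h1
      refine Or.inr ⟨rfl, ?_⟩
      by_contra hc
      exact absurd ((lt_append_iff rfl).2 (Or.inr ⟨rfl, not_le.1 hc⟩)) (not_lt.2 hle)
    · exact absurd (lt_append_of_lt h.symm h1 v u) (not_lt.2 hle)
  · rintro (h1 | ⟨rfl, h2⟩)
    · exact (lt_append_of_lt h h1 u v).le
    · rcases h2.lt_or_eq with h3 | h3
      · exact ((lt_append_iff rfl).2 (Or.inr ⟨rfl, h3⟩)).le
      · rw [h3]

lemma le_of_append_le {x y u v : List ℕ} (h : x.length = y.length)
    (hle : x ++ u ≤ y ++ v) : x ≤ y := by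
  rcases (le_append_iff h).1 hle with h1 | ⟨rfl, -⟩
  · exact h1.le
  · exact le_rfl

lemma append_le_append {x y u v : List ℕ} (h : x.length = y.length)
    (hxy : x ≤ y) (huv : x = y → u ≤ v) : x ++ u ≤ y ++ v := by
  rcases hxy.lt_or_eq with h1 | h1
  · exact ((lt_append_iff h).2 (Or.inl h1)).le
  · exact (le_append_iff h).2 (Or.inr ⟨h1, huv h1⟩)

lemma append_singleton_lt {x : List ℕ} {a b : ℕ} (h : a < b) :
    x ++ [a] < x ++ [b] := (lt_append_iff rfl).2 (Or.inr ⟨rfl, List.Lex.rel h⟩)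

lemma lt_plusB (w : List ℕ) (h : w ≠ []) : w < plusB w := by
  conv_lhs => rw [← List.dropLast_append_getLast h]
  rw [plusB_eq w h]
  exact append_singleton_lt (Nat.lt_succ_self _)

lemma singleton_le_singleton {a b : ℕ} (h : a ≤ b) : ([a] : List ℕ) ≤ [b] := by
  rcases h.lt_or_eq with h1 | rfl
  · exact (lex_lt (List.Lex.rel h1)).le
  · exact le_rfl

lemma cons_le_cons {a : ℕ} {l m : List ℕ} (h : l ≤ m) : (a :: l : List ℕ) ≤ a :: m := by
  rcases h.lt_or_eq with h1 | rfl
  · exact (lex_lt (List.Lex.cons h1)).le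
  · exact le_rfl

lemma plusB_cons {a : ℕ} {xs : List ℕ} (h : xs ≠ []) :
    plusB (a :: xs) = a :: plusB xs := by
  rw [plusB_eq _ (List.cons_ne_nil a xs), plusB_eq _ h,
    List.dropLast_cons_of_ne_nil h, List.getLast_cons h, List.cons_append]

lemma plusB_le_of_lt : ∀ {x y : List ℕ}, x.length = y.length → x ≠ [] → x < y →
    plusB x ≤ y
  | [], _, _, hx, _ => absurd rfl hx
  | a :: xs, [], h, _, _ => by simp at h
  | a :: xs, b :: ys, h, _, hlt => by
      have hlen : xs.length = ys.length := by simpa using h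
      rcases cons_lt_cons_iff.1 hlt with h1 | ⟨rfl, h2⟩
      · cases xs with
        | nil =>
            have hy : ys = [] := List.length_eq_zero_iff.1 hlen.symm
            subst hy
            exact singleton_le_singleton h1
        | cons c cs =>
            rw [plusB_cons (List.cons_ne_nil c cs)]
            exact (lex_lt (List.Lex.rel h1)).le
      · have hxs : xs ≠ [] := by
          intro he; subst he
          have hy : ys = [] := List.length_eq_zero_iff.1 hlen.symm
          subst hy
          exact lt_irrefl _ h2
        rw [plusB_cons hxs]
        exact cons_le_cons (plusB_le_of_lt hlen hxs h2)

lemma length_reflB (N : ℕ) (w : List ℕ) : (reflB N w).length = w.length := by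
  simp [reflB]

lemma reflB_append (N : ℕ) (x y : List ℕ) : reflB N (x ++ y) = reflB N x ++ reflB N y := by
  simp [reflB]

lemma reflB_take (N : ℕ) (w : List ℕ) (k : ℕ) : reflB N (w.take k) = (reflB N w).take k := by
  simp [reflB, List.map_take]

lemma reflB_drop (N : ℕ) (w : List ℕ) (k : ℕ) : reflB N (w.drop k) = (reflB N w).drop k := by
  simp [reflB, List.map_drop]

lemma reflB_ne_nil {N : ℕ} {w : List ℕ} (h : w ≠ []) : reflB N w ≠ [] := by
  simp [reflB, h]

lemma reflB_reflB {N : ℕ} {w : List ℕ} (h : ∀ c ∈ w, c < N) :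
    reflB N (reflB N w) = w := by
  rw [reflB, reflB, List.map_map]
  have h2 : ∀ c ∈ w, ((fun c => N - 1 - c) ∘ (fun c => N - 1 - c)) c = id c := by
    intro c hc
    have := h c hc
    simp; omega
  rw [List.map_congr_left h2, List.map_id]

lemma reflB_lt_reflB : ∀ {x y : List ℕ}, ∀ N, x.length = y.length →
    (∀ c ∈ y, c < N) → x < y → reflB N y < reflB N x
  | x, [], _, _, _, h => absurd h (List.not_lt_nil _)
  | [], b :: ys, N, h, _, _ => by simp at h
  | a :: xs, b :: ys, N, h, hy, hlt => by
      have hlen : xs.length = ys.length := by simpa using h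
      rcases cons_lt_cons_iff.1 hlt with h1 | ⟨rfl, h2⟩
      · refine lex_lt (List.Lex.rel ?_)
        have hb := hy b (by simp)
        show N - 1 - b < N - 1 - a
        omega
      · exact lex_lt (List.Lex.cons
          (reflB_lt_reflB N hlen (fun c hc => hy c (by simp [hc])) h2))

lemma reflB_le_reflB {x y : List ℕ} (N : ℕ) (h : x.length = y.length)
    (hy : ∀ c ∈ y, c < N) (hle : x ≤ y) : reflB N y ≤ reflB N x := by
  rcases hle.lt_or_eq with h1 | rfl
  · exact (reflB_lt_reflB N h hy h1).le
  · exact le_rfl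

def Good (N : ℕ) (l : List ℕ) : Prop :=
  l ≠ [] ∧ (∀ c ∈ l, c < N) ∧ 1 ≤ l.getLast!

def Key (N : ℕ) (l : List ℕ) : Prop :=
  ∀ j < l.length, reflB N (l.take (l.length - j)) < l.drop j ∧
    l.drop j ≤ l.take (l.length - j)

lemma drop_len {l : List ℕ} {j : ℕ} (hj : j < l.length) : l.drop j ≠ [] := by
  intro h; have := congrArg List.length h; simp at this; omega

lemma base {N : ℕ} (hN : 2 ≤ N) {w : List ℕ} (hadm : Admissible N w) :
    Good N (plusB w) ∧ Key N (plusB w) := by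
  obtain ⟨hne, hdig, hlast, hineq⟩ := hadm
  have hp : 0 < w.length := List.length_pos_iff.2 hne
  have hWlen : (plusB w).length = w.length := length_plusB w hne
  have hg : w.getLast! = w.getLast hne := getLast!_eq_getLast w hne
  have hglt : w.getLast hne < N - 1 := hg ▸ hlast
  constructor
  · refine ⟨plusB_ne_nil w, ?_, ?_⟩
    · intro c hc
      rw [plusB_eq w hne] at hc
      rcases List.mem_append.1 hc with hc | hc
      · exact hdig c (List.dropLast_subset w hc)
      · have : c = w.getLast hne + 1 := by simpa using hc
        omega
    · rw [plusB_eq w hne, getLast!_concat]; omega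
  · intro j hj
    rw [hWlen] at hj
    rcases Nat.eq_zero_or_pos j with rfl | hj1
    · constructor
      · rw [Nat.sub_zero, List.drop_zero]
        rw [show (plusB w).take (plusB w).length = plusB w from by simp]
        have h1 : reflB N (plusB w) < reflB N w := by
          rw [plusB_eq w hne, reflB_append]
          conv_rhs => rw [← List.dropLast_append_getLast hne, reflB_append]
          have : reflB N [w.getLast hne + 1] = [N - 1 - (w.getLast hne + 1)] := by
            simp [reflB]
          rw [this, show reflB N [w.getLast hne] = [N - 1 - w.getLast hne] from by
            simp [reflB]]
          exact append_singleton_lt (by omega)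
        have h2 : reflB N w ≤ w := by
          have := (hineq 0 hp).1
          simpa [rotB] using this
        exact (h1.trans_le h2).trans (lt_plusB w hne)
      · rw [Nat.sub_zero, List.drop_zero]
        rw [show (plusB w).take (plusB w).length = plusB w from by simp]
    · have hdne : w.drop j ≠ [] := drop_len hj
      have hWd : (plusB w).drop j = plusB (w.drop j) := drop_plusB w j hj
      have hWt : (plusB w).take ((plusB w).length - j) = w.take (w.length - j) := by
        rw [hWlen]; exact take_plusB w _ (by omega)
      constructor
      · rw [hWt, hWd]
        have hsplit : reflB N w
            = reflB N (w.take (w.length - j)) ++ reflB N (w.drop (w.length - j)) := by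
          rw [← reflB_append, List.take_append_drop]
        have h1 := (hineq j hj).1
        rw [hsplit, rotB] at h1
        have hlen1 : (reflB N (w.take (w.length - j))).length = (w.drop j).length := by
          rw [length_reflB]; simp only [List.length_take, List.length_drop, List.length_append, min_le_iff, le_min_iff]; omega
        exact (le_of_append_le hlen1 h1).trans_lt (lt_plusB _ hdne)
      · rw [hWt, hWd]
        have h3 := (hineq j hj).2
        conv_rhs at h3 =>
          rw [← List.take_append_drop (w.length - j) (plusB w)]
        have hlen2 : (plusB (w.drop j)).length
            = ((plusB w).take (w.length - j)).length := by
          rw [length_plusB _ hdne, List.length_take, hWlen]; simp only [List.length_take, List.length_drop, List.length_append, min_le_iff, le_min_iff]; omega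
        have h4 := le_of_append_le hlen2 h3
        rwa [take_plusB w _ (by omega)] at h4

lemma step {N : ℕ} (hN : 2 ≤ N) {l : List ℕ} (hg : Good N l) (hk : Key N l) :
    Good N (l ++ plusB (reflB N l)) ∧ Key N (l ++ plusB (reflB N l)) := by
  obtain ⟨hne, hdig, hlast1⟩ := hg
  have hLpos : 0 < l.length := List.length_pos_iff.2 hne
  have hrne : reflB N l ≠ [] := reflB_ne_nil hne
  have hrlen : (reflB N l).length = l.length := length_reflB N l
  have hClen : (plusB (reflB N l)).length = l.length := by
    rw [length_plusB _ hrne, hrlen]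
  have hBlen : (l ++ plusB (reflB N l)).length = l.length + l.length := by
    simp [hClen]
  have hgl : l.getLast! < N := by
    rw [getLast!_eq_getLast l hne]; exact hdig _ (List.getLast_mem hne)
  have hrlast : (reflB N l).getLast! = N - 1 - l.getLast! := by
    conv_lhs => rw [← List.dropLast_append_getLast hne, reflB_append]
    rw [show reflB N [l.getLast hne] = [N - 1 - l.getLast hne] from by simp [reflB],
      getLast!_concat, getLast!_eq_getLast l hne]
  have hCdig : ∀ c ∈ plusB (reflB N l), c < N := by
    intro c hc
    rw [plusB] at hc
    rcases List.mem_append.1 hc with hc | hc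
    · have : c ∈ reflB N l := List.dropLast_subset _ hc
      simp only [reflB, List.mem_map] at this
      obtain ⟨d, _, rfl⟩ := this
      omega
    · have : c = (reflB N l).getLast! + 1 := by simpa using hc
      rw [hrlast] at this
      omega
  constructor
  · refine ⟨by simp [hne], ?_, ?_⟩
    · intro c hc
      rcases List.mem_append.1 hc with hc | hc
      · exact hdig c hc
      · exact hCdig c hc
    · rw [getLast!_append (plusB_ne_nil _), plusB, getLast!_concat]
      omega
  · intro j hj
    rw [hBlen] at hj
    set C := plusB (reflB N l) with hCdef
    have hCne : C ≠ [] := plusB_ne_nil _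
    rcases Nat.lt_or_ge j l.length with hjL | hjL
    · -- j < L
      have hdropB : (l ++ C).drop j = l.drop j ++ C := by
        rw [List.drop_append, Nat.sub_eq_zero_of_le hjL.le, List.drop_zero]
      have htakeB : (l ++ C).take (l.length + l.length - j)
          = l ++ C.take (l.length - j) := by
        rw [List.take_append]
        congr 1
        · exact List.take_of_length_le (by omega)
        · congr 1; omega
      rcases Nat.eq_zero_or_pos j with rfl | hj1
      · constructor
        · rw [Nat.sub_zero, List.drop_zero]
          rw [show (l ++ C).take (l ++ C).length = l ++ C from by simp]
          rw [reflB_append]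
          refine lt_append_of_lt (length_reflB N l) ?_ _ _
          have := (hk 0 hLpos).1
          simpa using this
        · rw [Nat.sub_zero, List.drop_zero]
          rw [show (l ++ C).take (l ++ C).length = l ++ C from by simp]
      · constructor
        · rw [hBlen, hdropB, htakeB, reflB_append]
          have e1 : reflB N l = reflB N (l.take (l.length - j))
              ++ reflB N (l.drop (l.length - j)) := by
            rw [← reflB_append, List.take_append_drop]
          rw [e1, List.append_assoc]
          refine lt_append_of_lt ?_ (hk j hjL).1 _ _
          rw [length_reflB]; simp only [List.length_take, List.length_drop, List.length_append, min_le_iff, le_min_iff]; omega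
        · rw [hBlen, hdropB, htakeB]
          have e2 : l ++ C.take (l.length - j) = l.take (l.length - j)
              ++ (l.drop (l.length - j) ++ C.take (l.length - j)) := by
            rw [← List.append_assoc, List.take_append_drop]
          rw [e2]
          refine append_le_append ?_ (hk j hjL).2 ?_
          · simp only [List.length_take, List.length_drop, List.length_append, min_le_iff, le_min_iff]; omega
          · intro _
            have hmlt : l.length - j < l.length := by omega
            have h1 := (hk (l.length - j) hmlt).1
            rw [show l.length - (l.length - j) = j from by omega] at h1
            have hCtake : C.take j = reflB N (l.take j) := by
              rw [hCdef, take_plusB _ j (by rw [hrlen]; omega), ← reflB_take]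
            conv_lhs => rw [← List.take_append_drop j C]
            refine (lt_append_of_lt ?_ ?_ _ _).le
            · rw [List.length_take, List.length_drop, hClen]; omega
            · rw [hCtake]; exact h1
    · -- L ≤ j
      have hj' : j - l.length < l.length := by omega
      have hdne : l.drop (j - l.length) ≠ [] := drop_len hj'
      have hdropB : (l ++ C).drop j = plusB (reflB N (l.drop (j - l.length))) := by
        rw [List.drop_append, List.drop_eq_nil_of_le hjL, List.nil_append,
          hCdef, drop_plusB _ _ (by rw [hrlen]; omega), ← reflB_drop]
      have htakeB : (l ++ C).take (l.length + l.length - j)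
          = l.take (l.length + l.length - j) := by
        rw [List.take_append,
          show l.length + l.length - j - l.length = 0 from by omega,
          List.take_zero, List.append_nil]
      have hmm : l.length + l.length - j = l.length - (j - l.length) := by omega
      have h1 := (hk (j - l.length) hj').1
      have h2 := (hk (j - l.length) hj').2
      have hlen3 : (l.drop (j - l.length)).length
          = (l.take (l.length - (j - l.length))).length := by
        simp only [List.length_take, List.length_drop, List.length_append, min_le_iff, le_min_iff]; omega
      have htd : ∀ c ∈ l.take (l.length - (j - l.length)), c < N :=
        fun c hc => hdig c (List.take_subset _ _ hc)
      constructor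
      · rw [hBlen, hdropB, htakeB, hmm]
        exact (reflB_le_reflB N hlen3 htd h2).trans_lt (lt_plusB _ (reflB_ne_nil hdne))
      · rw [hBlen, hdropB, htakeB, hmm]
        have h3 : reflB N (l.drop (j - l.length)) < l.take (l.length - (j - l.length)) := by
          have h4 := reflB_lt_reflB N (by rw [length_reflB]; exact hlen3.symm)
            (fun c hc => hdig c (List.drop_subset _ _ hc)) h1
          rwa [reflB_reflB htd] at h4
        refine plusB_le_of_lt ?_ (reflB_ne_nil hdne) h3
        rw [length_reflB]; exact hlen3

end LexAux

/-- Lemma 4.1 — bounds on the suffixes of the prefixes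
`θ_1⋯θ_{2^n p}` of the generalized Thue–Morse sequence. -/
theorem stmt2 (N : ℕ) (hN : 2 ≤ N) (w : List ℕ) (hadm : Admissible N w) :
    ∀ n : ℕ, ∀ j < (gtmBlock N w n).length,
      reflB N ((gtmBlock N w n).take ((gtmBlock N w n).length - j)) <
        (gtmBlock N w n).drop j ∧
      (gtmBlock N w n).drop j ≤ (gtmBlock N w n).take ((gtmBlock N w n).length - j) := by
  have main : ∀ n, LexAux.Good N (gtmBlock N w n) ∧ LexAux.Key N (gtmBlock N w n) := by
    intro n
    induction n with
    | zero => exact LexAux.base hN hadm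
    | succ k ih => exact LexAux.step hN ih.1 ih.2
  intro n
  exact (main n).2
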